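/- Let n ≥ 1, let e be an edge of the complete graph K_{n+1} with endpoints u ≠ v, and let s_e = q(u) = q(v) be the corresponding special vertex of K_n. For every spanning tree T of K_n, the number of spanning trees T' of K_{n+1} containing e whose contracted image under c_e equals T is exactly 2^{ν_T(s_e)}, where ν_T(s_e) denotes the degree (valence) of the vertex s_e in the tree T. -/

import Mathlib

open SimpleGraph

namespace CPC

/-- Closed trails in acyclic graphs are trivial. -/
lemma acyclic_closed_trail {V : Type*} {G : SimpleGraph V} (hG : G.IsAcyclic)
    {x : V} (c : G.Walk x x) (hc : c.IsTrail) : c = SimpleGraph.Walk.nil := by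
  classical
  cases c with
  | nil => rfl
  | @cons _ y _ h p =>
    exfalso
    rw [Walk.isTrail_cons] at hc
    have h1 : p.toPath = SimpleGraph.Path.singleton h.symm :=
      hG.path_unique _ _
    have h2 : s(y, x) ∈ (p.toPath : G.Walk y x).edges := by
      rw [h1]; simp [SimpleGraph.Path.singleton]
    have h3 : s(y, x) ∈ p.edges := Walk.edges_toPath_subset p h2
    rw [Sym2.eq_swap] at h3
    exact hc.2 h3

lemma no_triangle {V : Type*} {G : SimpleGraph V} (hG : G.IsAcyclic)
    {a b c : V} (hab : G.Adj a b) (hbc : G.Adj b c) (hca : G.Adj c a) : False := by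
  have ht : (Walk.cons hab (Walk.cons hbc (Walk.cons hca Walk.nil))).IsTrail := by
    simp [Walk.isTrail_def, Sym2.eq_iff]
    exact ⟨⟨⟨fun _ => hbc.ne, hca.ne'⟩, fun _ => hab.ne', hbc.ne⟩, fun _ => hca.ne, hab.ne'⟩
  have := acyclic_closed_trail hG _ ht
  simp at this

variable {n : ℕ}

/-- canonical section of `q` sending `q u` to `u`. -/
noncomputable def rr (u : Fin (n + 1)) (q : Fin (n + 1) → Fin n)
    (hq : Function.Surjective q) (a : Fin n) : Fin (n + 1) :=
  if a = q u then u else (hq a).choose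

/-- the extra condition on an edge `{x,y}` of the lift. -/
def P (u v : Fin (n + 1)) (q : Fin (n + 1) → Fin n) (f : Fin n → Bool)
    (x y : Fin (n + 1)) : Prop :=
  (x = u → f (q y) = true) ∧ (x = v → f (q y) = false)

/-- The candidate lifted tree determined by a boolean choice function `f`. -/
def GG (u v : Fin (n + 1)) (huv : u ≠ v) (q : Fin (n + 1) → Fin n)
    (T : SimpleGraph (Fin n)) (f : Fin n → Bool) : SimpleGraph (Fin (n + 1)) where
  Adj x y := s(x, y) = s(u, v) ∨ (T.Adj (q x) (q y) ∧ P u v q f x y ∧ P u v q f y x)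
  symm := by
    constructor
    intro x y h
    rcases h with h | ⟨h1, h2, h3⟩
    · left; rwa [Sym2.eq_swap]
    · exact Or.inr ⟨h1.symm, h3, h2⟩
  loopless := by
    constructor
    intro x h
    rcases h with h | ⟨h1, _⟩
    · rw [Sym2.eq_iff] at h
      rcases h with ⟨h1, h2⟩ | ⟨h1, h2⟩ <;> exact huv (h1 ▸ h2 ▸ rfl)
    · exact T.irrefl h1

section Main

variable {u v : Fin (n + 1)} {q : Fin (n + 1) → Fin n}
  {T : SimpleGraph (Fin n)} {f : Fin n → Bool}

lemma q_eq_qu_iff (hquv : q u = q v)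
    (hinj : ∀ x y : Fin (n + 1), q x = q y → x = y ∨ s(x, y) = s(u, v))
    {x : Fin (n + 1)} : q x = q u ↔ x = u ∨ x = v := by
  constructor
  · intro h
    rcases hinj x u h with h' | h'
    · exact Or.inl h'
    · rw [Sym2.eq_iff] at h'
      rcases h' with ⟨h1, _⟩ | ⟨h1, _⟩
      · exact Or.inl h1
      · exact Or.inr h1
  · rintro (rfl | rfl)
    · rfl
    · exact hquv.symm

lemma q_rr (hq : Function.Surjective q) (a : Fin n) : q (rr u q hq a) = a := by
  unfold rr
  split
  · subst a; rfl
  · exact (hq a).choose_spec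

lemma rr_qu (hq : Function.Surjective q) : rr u q hq (q u) = u := if_pos rfl

lemma rr_ne (hq : Function.Surjective q) (hquv : q u = q v)
    {a : Fin n} (ha : a ≠ q u) : rr u q hq a ≠ u ∧ rr u q hq a ≠ v := by
  constructor <;> intro h <;> apply ha
  · rw [← q_rr hq a, h]
  · rw [← q_rr hq a, h, ← hquv]

lemma rr_eq_self (hq : Function.Surjective q)
    (hinj : ∀ x y : Fin (n + 1), q x = q y → x = y ∨ s(x, y) = s(u, v))
    {x : Fin (n + 1)} (hx : x ≠ u) (hx' : x ≠ v) : rr u q hq (q x) = x := by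
  have h1 : q (rr u q hq (q x)) = q x := q_rr hq _
  rcases hinj _ _ h1 with h | h
  · exact h
  · rw [Sym2.eq_iff] at h
    rcases h with ⟨_, h2⟩ | ⟨_, h2⟩
    · exact absurd h2 hx'
    · exact absurd h2 hx

lemma q_ne_qu (hquv : q u = q v)
    (hinj : ∀ x y : Fin (n + 1), q x = q y → x = y ∨ s(x, y) = s(u, v))
    {x : Fin (n + 1)} (hx : x ≠ u) (hx' : x ≠ v) : q x ≠ q u := by
  intro h
  rcases (q_eq_qu_iff hquv hinj).mp h with h | h
  · exact hx h
  · exact hx' h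

lemma gg_adj_e (huv : u ≠ v) : (GG u v huv q T f).Adj u v := Or.inl rfl

lemma gg_adj_cb (huv : u ≠ v) (hq : Function.Surjective q) (hquv : q u = q v)
    {b : Fin n} (hb : T.Adj (q u) b) :
    (GG u v huv q T f).Adj (if f b then u else v) (rr u q hq b) := by
  have hrb := rr_ne hq hquv (a := b) hb.ne'
  refine Or.inr ⟨?_, ⟨?_, ?_⟩, ⟨?_, ?_⟩⟩
  · rw [q_rr hq]
    split
    · exact hb
    · rwa [← hquv]
  · intro h
    rw [q_rr hq]
    by_cases hfb : f b
    · exact hfb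
    · exfalso; rw [if_neg hfb] at h; exact huv h.symm
  · intro h
    rw [q_rr hq]
    by_cases hfb : f b
    · exfalso; rw [if_pos hfb] at h; exact huv h
    · simpa using hfb
  · exact fun h => absurd h hrb.1
  · exact fun h => absurd h hrb.2

lemma gg_adj_rr (huv : u ≠ v) (hq : Function.Surjective q) (hquv : q u = q v)
    {a b : Fin n} (ha : a ≠ q u) (hb : b ≠ q u) (hab : T.Adj a b) :
    (GG u v huv q T f).Adj (rr u q hq a) (rr u q hq b) := by
  refine Or.inr ⟨?_, ⟨?_, ?_⟩, ⟨?_, ?_⟩⟩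
  · rwa [q_rr hq, q_rr hq]
  · exact fun h => absurd h (rr_ne hq hquv ha).1
  · exact fun h => absurd h (rr_ne hq hquv ha).2
  · exact fun h => absurd h (rr_ne hq hquv hb).1
  · exact fun h => absurd h (rr_ne hq hquv hb).2

lemma gg_connected (huv : u ≠ v) (hq : Function.Surjective q) (hquv : q u = q v)
    (hinj : ∀ x y : Fin (n + 1), q x = q y → x = y ∨ s(x, y) = s(u, v))
    (hT : T.Connected) : (GG u v huv q T f).Connected := by
  have hedge : ∀ a b : Fin n, T.Adj a b →
      (GG u v huv q T f).Reachable (rr u q hq a) (rr u q hq b) := by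
    intro a b hab
    by_cases ha : a = q u
    · subst ha
      have h1 := gg_adj_cb (T := T) (f := f) huv hq hquv hab
      have h2 : (GG u v huv q T f).Reachable u (if f b then u else v) := by
        split
        · exact Reachable.refl _
        · exact (gg_adj_e huv).reachable
      rw [rr_qu]
      exact h2.trans h1.reachable
    · by_cases hb : b = q u
      · subst hb
        have h1 := gg_adj_cb (T := T) (f := f) huv hq hquv hab.symm
        have h2 : (GG u v huv q T f).Reachable u (if f a then u else v) := by
          split
          · exact Reachable.refl _
          · exact (gg_adj_e huv).reachable
        rw [rr_qu]
        exact (h2.trans h1.reachable).symm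
      · exact (gg_adj_rr huv hq hquv ha hb hab).reachable
  have hwalk : ∀ a b : Fin n, (GG u v huv q T f).Reachable (rr u q hq a) (rr u q hq b) := by
    intro a b
    obtain ⟨p⟩ := hT.preconnected a b
    induction p with
    | nil => exact Reachable.refl _
    | cons h p ih => exact (hedge _ _ h).trans ih
  have hbase : ∀ x : Fin (n + 1), (GG u v huv q T f).Reachable x (rr u q hq (q x)) := by
    intro x
    by_cases hx : x = u
    · subst hx; rw [rr_qu]
    · by_cases hx' : x = v
      · rw [hx', ← hquv, rr_qu]
        exact ((gg_adj_e huv).symm.reachable (G := GG u v huv q T f))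
      · rw [rr_eq_self hq hinj hx hx']
  constructor
  intro x y
  exact (hbase x).trans ((hwalk (q x) (q y)).trans (hbase y).symm)

/-- injectivity (on first coordinates) of contraction on edges of `GG` other than `s(u,v)`. -/
lemma gg_map_inj (huv : u ≠ v)
    (hinj : ∀ x y : Fin (n + 1), q x = q y → x = y ∨ s(x, y) = s(u, v))
    {x y x' y' : Fin (n + 1)}
    (h : (GG u v huv q T f).Adj x y) (h' : (GG u v huv q T f).Adj x' y')
    (hne : s(x, y) ≠ s(u, v)) (hne' : s(x', y') ≠ s(u, v))
    (hx : q x' = q x) (hy : q y' = q y) : x' = x := by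
  rcases h with h | ⟨hT1, hP1, hQ1⟩; · exact absurd h hne
  rcases h' with h' | ⟨hT2, hP2, hQ2⟩; · exact absurd h' hne'
  rcases hinj x' x hx with h | h
  · exact h
  · exfalso
    rw [Sym2.eq_iff] at h
    rcases h with ⟨rfl, rfl⟩ | ⟨rfl, rfl⟩
    · have h1 : f (q y) = false := hP1.2 rfl
      have h2 : f (q y') = true := hP2.1 rfl
      rw [hy, h1] at h2; simp at h2
    · have h1 : f (q y) = true := hP1.1 rfl
      have h2 : f (q y') = false := hP2.2 rfl
      rw [hy, h1] at h2; simp at h2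

lemma gg_map_inj_sym2 (huv : u ≠ v)
    (hinj : ∀ x y : Fin (n + 1), q x = q y → x = y ∨ s(x, y) = s(u, v))
    {e1 e2 : Sym2 (Fin (n + 1))}
    (h1 : e1 ∈ (GG u v huv q T f).edgeSet) (h2 : e2 ∈ (GG u v huv q T f).edgeSet)
    (hn1 : e1 ≠ s(u, v)) (hn2 : e2 ≠ s(u, v))
    (h : Sym2.map q e1 = Sym2.map q e2) : e1 = e2 := by
  induction e1 using Sym2.ind with
  | _ x y =>
  induction e2 using Sym2.ind with
  | _ x' y' =>
  rw [SimpleGraph.mem_edgeSet] at h1 h2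
  rw [Sym2.map_pair_eq, Sym2.map_pair_eq, Sym2.eq_iff] at h
  have hsw : s(y, x) ≠ s(u, v) := by rwa [Sym2.eq_swap]
  have hsw' : s(y', x') ≠ s(u, v) := by rwa [Sym2.eq_swap]
  rcases h with ⟨hx, hy⟩ | ⟨hx, hy⟩
  · have e1 := gg_map_inj huv hinj h1 h2 hn1 hn2 hx.symm hy.symm
    have e2 := gg_map_inj huv hinj h1.symm h2.symm hsw hsw' hy.symm hx.symm
    rw [e1, e2]
  · have e1 := gg_map_inj huv hinj h1 h2.symm hn1 hsw' hx.symm hy.symm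
    have e2 := gg_map_inj huv hinj h1.symm h2 hsw hn2 hy.symm hx.symm
    rw [e1, e2, Sym2.eq_swap]

lemma gg_acyclic (huv : u ≠ v) (hq : Function.Surjective q) (hquv : q u = q v)
    (hinj : ∀ x y : Fin (n + 1), q x = q y → x = y ∨ s(x, y) = s(u, v))
    (hTa : T.IsAcyclic) : (GG u v huv q T f).IsAcyclic := by
  classical
  set G := GG u v huv q T f with hG
  set H := G \ SimpleGraph.fromEdgeSet {s(u, v)} with hH
  have hHadj : ∀ {x y : Fin (n + 1)}, H.Adj x y → G.Adj x y ∧ s(x, y) ≠ s(u, v) := by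
    intro x y hxy
    rw [hH, sdiff_adj] at hxy
    refine ⟨hxy.1, fun hc => hxy.2 ?_⟩
    rw [fromEdgeSet_adj]
    exact ⟨by rw [hc]; rfl, hxy.1.ne⟩
  have hhom : ∀ {x y : Fin (n + 1)}, H.Adj x y → T.Adj (q x) (q y) := by
    intro x y hxy
    obtain ⟨hxy, hne⟩ := hHadj hxy
    rcases hxy with h | ⟨h, _⟩
    · exact absurd h hne
    · exact h
  let φ : H →g T := ⟨q, fun h => hhom h⟩
  have hedge_mem : ∀ {a b : Fin (n + 1)} (p : H.Walk a b) (ed : Sym2 (Fin (n + 1))),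
      ed ∈ p.edges → ed ∈ G.edgeSet ∧ ed ≠ s(u, v) := by
    intro a b p ed hed
    have h1 : ed ∈ H.edgeSet := p.edges_subset_edgeSet hed
    rw [hH, edgeSet_sdiff] at h1
    refine ⟨h1.1, fun hc => h1.2 ?_⟩
    rw [edgeSet_fromEdgeSet]
    refine ⟨by rw [hc]; rfl, ?_⟩
    intro hd
    rw [hc] at hd
    exact huv (Sym2.mk_isDiag_iff.mp hd)
  have hproj : ∀ {a b : Fin (n + 1)} (p : H.Walk a b), p.IsTrail → (p.map φ).IsTrail := by
    intro a b p hp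
    rw [Walk.isTrail_def, Walk.edges_map]
    refine List.Nodup.map_on ?_ hp.edges_nodup
    intro e1 he1 e2 he2 hmap
    obtain ⟨m1, n1⟩ := hedge_mem p e1 he1
    obtain ⟨m2, n2⟩ := hedge_mem p e2 he2
    exact gg_map_inj_sym2 huv hinj m1 m2 n1 n2 hmap
  have hbridge : ¬ H.Reachable u v := by
    rintro ⟨p0⟩
    have hp : (p0.toPath : H.Walk u v).IsTrail := p0.toPath.2.isTrail
    have ht : (((p0.toPath : H.Walk u v).map φ).copy rfl hquv.symm).IsTrail := by
      rw [Walk.isTrail_copy]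
      exact hproj _ hp
    have hnil := acyclic_closed_trail hTa _ ht
    have hlen : ((p0.toPath : H.Walk u v).map φ).length = 0 := by
      have := congrArg Walk.length hnil
      simpa using this
    rw [Walk.length_map] at hlen
    exact huv (Walk.eq_of_length_eq_zero hlen)
  intro x c hc
  by_cases he : s(u, v) ∈ c.edges
  · have hB : G.IsBridge s(u, v) := isBridge_iff.mpr hbridge
    exact hB.notMem_edges_of_isCycle hc he
  · have hsub : ∀ ed ∈ c.edges, ed ∈ H.edgeSet := by
      intro ed hed
      have h1 : ed ∈ G.edgeSet := c.edges_subset_edgeSet hed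
      have h2 : ed ≠ s(u, v) := fun hh => he (hh ▸ hed)
      rw [hH, edgeSet_sdiff]
      refine ⟨h1, fun hc' => h2 ?_⟩
      rw [edgeSet_fromEdgeSet] at hc'
      exact hc'.1
    have ht : ((c.transfer H hsub).map φ).IsTrail := by
      refine hproj _ ?_
      rw [Walk.isTrail_def, Walk.edges_transfer]
      exact hc.isTrail.edges_nodup
    have hnil := acyclic_closed_trail hTa _ ht
    have hlen : c.length = 0 := by
      have := congrArg Walk.length hnil
      rwa [Walk.length_map, Walk.length_transfer, Walk.length_nil] at this
    exact hc.not_nil (Walk.nil_iff_length_eq.mpr hlen)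

lemma gg_contract (huv : u ≠ v) (hq : Function.Surjective q) (hquv : q u = q v)
    (hinj : ∀ x y : Fin (n + 1), q x = q y → x = y ∨ s(x, y) = s(u, v)) :
    Sym2.map q '' ((GG u v huv q T f).edgeSet \ {s(u, v)}) = T.edgeSet := by
  apply Set.Subset.antisymm
  · rintro ed ⟨e1, ⟨he1, hne⟩, rfl⟩
    induction e1 using Sym2.ind with
    | _ x y =>
    rw [SimpleGraph.mem_edgeSet] at he1
    rcases he1 with h | ⟨h, _⟩
    · exact absurd h hne
    · rw [Sym2.map_pair_eq, SimpleGraph.mem_edgeSet]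
      exact h
  · intro ed hed
    induction ed using Sym2.ind with
    | _ a b =>
    rw [SimpleGraph.mem_edgeSet] at hed
    by_cases ha : a = q u
    · subst ha
      have hb : b ≠ q u := hed.ne'
      have hrb := rr_ne hq hquv hb
      refine ⟨s(if f b then u else v, rr u q hq b), ⟨?_, ?_⟩, ?_⟩
      · exact gg_adj_cb huv hq hquv hed
      · simp only [Set.mem_singleton_iff, Sym2.eq_iff]
        rintro (⟨h1, h2⟩ | ⟨h1, h2⟩)
        · exact hrb.2 h2
        · exact hrb.1 h2
      · rw [Sym2.map_pair_eq, q_rr hq]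
        split
        · rfl
        · rw [← hquv]
    · by_cases hb : b = q u
      · subst hb
        have ha' : a ≠ q u := fun h => ha h
        have hra := rr_ne hq hquv ha'
        refine ⟨s(if f a then u else v, rr u q hq a), ⟨?_, ?_⟩, ?_⟩
        · exact gg_adj_cb huv hq hquv hed.symm
        · simp only [Set.mem_singleton_iff, Sym2.eq_iff]
          rintro (⟨h1, h2⟩ | ⟨h1, h2⟩)
          · exact hra.2 h2
          · exact hra.1 h2
        · rw [Sym2.map_pair_eq, q_rr hq, Sym2.eq_swap]
          split
          · rfl
          · rw [← hquv]
      · refine ⟨s(rr u q hq a, rr u q hq b), ⟨?_, ?_⟩, ?_⟩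
        · exact gg_adj_rr huv hq hquv ha hb hed
        · simp only [Set.mem_singleton_iff, Sym2.eq_iff]
          rintro (⟨h1, h2⟩ | ⟨h1, h2⟩)
          · exact (rr_ne hq hquv ha).1 h1
          · exact (rr_ne hq hquv ha).2 h1
        · rw [Sym2.map_pair_eq, q_rr hq, q_rr hq]

lemma gg_congr (huv : u ≠ v) (hquv : q u = q v) {f1 f2 : Fin n → Bool}
    (h : ∀ b, T.Adj (q u) b → f1 b = f2 b) :
    GG u v huv q T f1 = GG u v huv q T f2 := by
  suffices h12 : ∀ g1 g2 : Fin n → Bool, (∀ b, T.Adj (q u) b → g1 b = g2 b) →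
      ∀ x y, (GG u v huv q T g1).Adj x y → (GG u v huv q T g2).Adj x y by
    ext x y
    exact ⟨h12 f1 f2 h x y, h12 f2 f1 (fun b hb => (h b hb).symm) x y⟩
  intro g1 g2 hg x y hxy
  rcases hxy with h' | ⟨hT', P1, P2⟩
  · exact Or.inl h'
  · refine Or.inr ⟨hT', ⟨?_, ?_⟩, ⟨?_, ?_⟩⟩
    · rintro rfl
      rw [← hg (q y) hT', P1.1 rfl]
    · rintro rfl
      rw [← hg (q y) (hquv ▸ hT'), P1.2 rfl]
    · rintro rfl
      rw [← hg (q x) hT'.symm, P2.1 rfl]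
    · rintro rfl
      rw [← hg (q x) (hquv ▸ hT'.symm), P2.2 rfl]

/-- the boolean choice function associated to a lifted tree. -/
noncomputable def ch (u : Fin (n + 1)) (q : Fin (n + 1) → Fin n)
    (hq : Function.Surjective q) (T' : SimpleGraph (Fin (n + 1))) : Fin n → Bool :=
  fun b => @decide (T'.Adj u (rr u q hq b)) (Classical.propDecidable _)

lemma ch_eq_true {hq : Function.Surjective q} {T' : SimpleGraph (Fin (n + 1))} {b : Fin n} :
    ch u q hq T' b = true ↔ T'.Adj u (rr u q hq b) := by
  simp [ch]

lemma ch_eq_false {hq : Function.Surjective q} {T' : SimpleGraph (Fin (n + 1))} {b : Fin n} :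
    ch u q hq T' b = false ↔ ¬ T'.Adj u (rr u q hq b) := by
  simp [ch]

/-- reconstruction: a lifted tree is recovered from its choice function. -/
lemma gg_ch_eq (huv : u ≠ v) (hq : Function.Surjective q) (hquv : q u = q v)
    (hinj : ∀ x y : Fin (n + 1), q x = q y → x = y ∨ s(x, y) = s(u, v))
    {T' : SimpleGraph (Fin (n + 1))} (hT' : T'.IsTree)
    (he : s(u, v) ∈ T'.edgeSet)
    (himg : Sym2.map q '' (T'.edgeSet \ {s(u, v)}) = T.edgeSet) :
    GG u v huv q T (ch u q hq T') = T' := by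
  have hAc := hT'.IsAcyclic
  have huvAdj : T'.Adj u v := he
  ext x y
  constructor
  · intro h
    -- the key step, assuming `q y ≠ q u`
    have key : ∀ x y : Fin (n + 1), T.Adj (q x) (q y) →
        P u v q (ch u q hq T') x y → q y ≠ q u → T'.Adj x y := by
      intro x y hTadj Pxy hy
      have hyuv : y ≠ u ∧ y ≠ v := by
        constructor <;> rintro rfl
        · exact hy rfl
        · exact hy hquv.symm
      have hry : rr u q hq (q y) = y := rr_eq_self hq hinj hyuv.1 hyuv.2
      have hmem : s(q x, q y) ∈ T.edgeSet := hTadj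
      rw [← himg] at hmem
      obtain ⟨ed, ⟨hed, hedne⟩, hmap⟩ := hmem
      rw [Set.mem_singleton_iff] at hedne
      -- normalize the representative of ed
      obtain ⟨x'', y'', hadj'', hne'', hqx'', hqy''⟩ :
          ∃ x'' y'', T'.Adj x'' y'' ∧ s(x'', y'') ≠ s(u, v) ∧ q x'' = q x ∧ q y'' = q y := by
        induction ed using Sym2.ind with
        | _ x' y' =>
        rw [Sym2.map_pair_eq, Sym2.eq_iff] at hmap
        rw [SimpleGraph.mem_edgeSet] at hed
        rcases hmap with ⟨h1, h2⟩ | ⟨h1, h2⟩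
        · exact ⟨x', y', hed, hedne, h1, h2⟩
        · exact ⟨y', x', hed.symm, by rwa [Sym2.eq_swap], h2, h1⟩
      have hy'' : y'' = y := by
        have h1 : y'' ≠ u ∧ y'' ≠ v := by
          constructor <;> rintro rfl
          · exact hy hqy''.symm
          · exact hy (hqy''.symm.trans hquv.symm)
        rw [← rr_eq_self hq hinj h1.1 h1.2, hqy'', hry]
      rw [hy''] at hadj'' hne''
      by_cases hx : q x = q u
      · rcases (q_eq_qu_iff hquv hinj).mp hx with hxu | hxv
        · have := Pxy.1 hxu
          rw [ch_eq_true, hry] at this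
          rwa [hxu]
        · have hnotu : ¬ T'.Adj u y := by
            have := Pxy.2 hxv
            rwa [ch_eq_false, hry] at this
          rcases (q_eq_qu_iff hquv hinj).mp (hqx''.symm ▸ hx : q x'' = q u) with hxu'' | hxv''
          · rw [hxu''] at hadj''
            exact absurd hadj'' hnotu
          · rw [hxv''] at hadj''
            rwa [hxv]
      · have h1 : x'' ≠ u ∧ x'' ≠ v := by
          constructor <;> rintro rfl
          · exact hx (by rw [← hqx''])
          · exact hx (by rw [← hqx'', ← hquv])
        have h2 : x ≠ u ∧ x ≠ v := by
          constructor <;> rintro rfl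
          · exact hx rfl
          · exact hx hquv.symm
        have hxx : x'' = x := by
          rw [← rr_eq_self hq hinj h1.1 h1.2, ← rr_eq_self hq hinj h2.1 h2.2, hqx'']
        rwa [hxx] at hadj''
    rcases h with h | ⟨hTadj, Pxy, Pyx⟩
    · rw [Sym2.eq_iff] at h
      rcases h with ⟨rfl, rfl⟩ | ⟨rfl, rfl⟩
      · exact huvAdj
      · exact huvAdj.symm
    · by_cases hy : q y = q u
      · have hx : q x ≠ q u := fun h' => hTadj.ne (h'.trans hy.symm)
        exact (key y x hTadj.symm Pyx hx).symm
      · exact key x y hTadj Pxy hy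
  · intro h
    by_cases hxy : s(x, y) = s(u, v)
    · exact Or.inl hxy
    · have hTadj : T.Adj (q x) (q y) := by
        rw [← SimpleGraph.mem_edgeSet, ← himg]
        exact ⟨s(x, y), ⟨h, hxy⟩, Sym2.map_pair_eq q x y⟩
      refine Or.inr ⟨hTadj, ⟨?_, ?_⟩, ⟨?_, ?_⟩⟩
      · intro hxu
        have hyu : y ≠ u := fun h' => h.ne (hxu.trans h'.symm)
        have hyv : y ≠ v := fun h' => hxy (by rw [hxu, h'])
        rw [ch_eq_true, rr_eq_self hq hinj hyu hyv, ← hxu]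
        exact h
      · intro hxv
        have hyv : y ≠ v := fun h' => h.ne (hxv.trans h'.symm)
        have hyu : y ≠ u := fun h' => hxy (by rw [hxv, h', Sym2.eq_swap])
        rw [ch_eq_false, rr_eq_self hq hinj hyu hyv]
        intro hc
        exact no_triangle hAc huvAdj (hxv ▸ h) hc.symm
      · intro hyu
        have hxu : x ≠ u := fun h' => h.ne (h'.trans hyu.symm)
        have hxv : x ≠ v := fun h' => hxy (by rw [h', hyu, Sym2.eq_swap])
        rw [ch_eq_true, rr_eq_self hq hinj hxu hxv, ← hyu]
        exact h.symm
      · intro hyv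
        have hxv : x ≠ v := fun h' => h.ne (h'.trans hyv.symm)
        have hxu : x ≠ u := fun h' => hxy (by rw [h', hyv])
        rw [ch_eq_false, rr_eq_self hq hinj hxu hxv]
        intro hc
        exact no_triangle hAc huvAdj (hyv ▸ h).symm hc.symm

end Main

/-- extend a choice function on neighbours of `q u` to all of `Fin n`. -/
noncomputable def extSub (u : Fin (n + 1)) (q : Fin (n + 1) → Fin n) (T : SimpleGraph (Fin n))
    (f : {w : Fin n // T.Adj (q u) w} → Bool) : Fin n → Bool :=
  fun b => @dite _ (T.Adj (q u) b) (Classical.propDecidable _) (fun h => f ⟨b, h⟩) (fun _ => false)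

end CPC

/-- A spanning tree `T` of `K_n` has exactly `2 ^ (degree of `s_e = q u` in `T`)`
preimages among the spanning trees of `K_{n+1}` containing the edge `e = s(u,v)`, under the
contraction map `c_e`. -/
theorem card_preimages_of_contraction (n : ℕ) (hn : 1 ≤ n)
    (u v : Fin (n + 1)) (huv : u ≠ v)
    (q : Fin (n + 1) → Fin n) (hq : Function.Surjective q) (hquv : q u = q v)
    (hinj : ∀ x y : Fin (n + 1), q x = q y → x = y ∨ s(x, y) = s(u, v))
    (T : SimpleGraph (Fin n)) (hT : T.IsTree) :
    Nat.card {T' : SimpleGraph (Fin (n + 1)) //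
        T'.IsTree ∧ s(u, v) ∈ T'.edgeSet ∧
        SimpleGraph.fromEdgeSet (Sym2.map q '' (T'.edgeSet \ {s(u, v)})) = T} =
      2 ^ Set.ncard {w : Fin n | T.Adj (q u) w} := by
  classical
  have himg_of : ∀ T' : SimpleGraph (Fin (n + 1)),
      s(u, v) ∈ T'.edgeSet →
      SimpleGraph.fromEdgeSet (Sym2.map q '' (T'.edgeSet \ {s(u, v)})) = T →
      Sym2.map q '' (T'.edgeSet \ {s(u, v)}) = T.edgeSet := by
    intro T' he hcontr
    have h0 := congrArg SimpleGraph.edgeSet hcontr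
    rw [SimpleGraph.edgeSet_fromEdgeSet] at h0
    rw [← h0]
    refine (sdiff_eq_self_iff_disjoint.mpr (Set.disjoint_left.mpr ?_)).symm
    rintro ed hdiag ⟨e1, ⟨he1, hne⟩, rfl⟩
    induction e1 using Sym2.ind with
    | _ x y =>
    rw [SimpleGraph.mem_edgeSet] at he1
    rw [Set.mem_singleton_iff] at hne
    rw [Sym2.mem_diagSet, Sym2.map_pair_eq, Sym2.mk_isDiag_iff] at hdiag
    rcases hinj x y hdiag with h | h
    · exact absurd (h ▸ he1) (T'.irrefl)
    · exact absurd h hne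
  have E : {T' : SimpleGraph (Fin (n + 1)) //
      T'.IsTree ∧ s(u, v) ∈ T'.edgeSet ∧
      SimpleGraph.fromEdgeSet (Sym2.map q '' (T'.edgeSet \ {s(u, v)})) = T} ≃
      ({w : Fin n // T.Adj (q u) w} → Bool) :=
  { toFun := fun T' w => CPC.ch u q hq T'.1 w.1
    invFun := fun f => ⟨CPC.GG u v huv q T (CPC.extSub u q T f),
      ⟨CPC.gg_connected huv hq hquv hinj hT.1, CPC.gg_acyclic huv hq hquv hinj hT.2⟩,
      CPC.gg_adj_e huv,
      by rw [CPC.gg_contract huv hq hquv hinj]; exact SimpleGraph.fromEdgeSet_edgeSet T⟩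
    left_inv := by
      rintro ⟨T', hT', he, hcontr⟩
      apply Subtype.ext
      have himg := himg_of T' he hcontr
      have h1 : ∀ b, T.Adj (q u) b →
          CPC.extSub u q T (fun w => CPC.ch u q hq T' w.1) b = CPC.ch u q hq T' b := by
        intro b hb
        simp only [CPC.extSub]
        rw [dif_pos hb]
      exact (CPC.gg_congr huv hquv h1).trans (CPC.gg_ch_eq huv hq hquv hinj hT' he himg)
    right_inv := by
      intro f
      funext w
      obtain ⟨b, hb⟩ := w
      show CPC.ch u q hq (CPC.GG u v huv q T (CPC.extSub u q T f)) b = f ⟨b, hb⟩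
      have hiff : (CPC.GG u v huv q T (CPC.extSub u q T f)).Adj u (CPC.rr u q hq b) ↔
          CPC.extSub u q T f b = true := by
        constructor
        · intro h
          rcases h with h | ⟨_, Pxy, _⟩
          · rw [Sym2.eq_iff] at h
            rcases h with ⟨-, h2⟩ | ⟨h1, -⟩
            · exact absurd h2 (CPC.rr_ne hq hquv hb.ne').2
            · exact absurd h1 huv
          · have := Pxy.1 rfl
            rwa [CPC.q_rr hq] at this
        · intro hext
          refine Or.inr ⟨?_, ⟨?_, ?_⟩, ⟨?_, ?_⟩⟩
          · rw [CPC.q_rr hq]; exact hb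
          · intro _; rw [CPC.q_rr hq]; exact hext
          · intro h'; exact absurd h' huv
          · intro h'; exact absurd h' (CPC.rr_ne hq hquv hb.ne').1
          · intro h'; exact absurd h' (CPC.rr_ne hq hquv hb.ne').2
      have hextv : CPC.extSub u q T f b = f ⟨b, hb⟩ := by
        simp only [CPC.extSub]
        rw [dif_pos hb]
      rw [hextv] at hiff
      cases hfb : f ⟨b, hb⟩ with
      | true => exact CPC.ch_eq_true.mpr (hiff.mpr hfb)
      | false => exact CPC.ch_eq_false.mpr fun hA => by simp [hiff.mp hA] at hfb
  }
  have hbool : Nat.card Bool = 2 := by simp [Nat.card_eq_fintype_card]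
  rw [Nat.card_congr E, Nat.card_fun, hbool]
  have hcoe : Nat.card {w : Fin n // T.Adj (q u) w} = ({w : Fin n | T.Adj (q u) w}).ncard :=
    Nat.card_coe_set_eq {w : Fin n | T.Adj (q u) w}
  exact congrArg (fun k => 2 ^ k) hcoe
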